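/- In the QR decomposition H_eq = QR of the equivalent channel matrix of the 3D MIMO code, the following antisymmetry identities hold: ⟨q_{j+1},h_k⟩ = −⟨q_j,h_{k+1}⟩ for all j ∈ {5,7} and k ∈ {9,11}. -/

import Mathlib

noncomputable section

open scoped InnerProductSpace

namespace MIMO3D

/-- The Golden-code parameter θ = (1+√5)/2. -/
def goldenTheta : ℝ := (1 + Real.sqrt 5) / 2

/-- θ̄ = 1 − θ. -/
def goldenThetaBar : ℝ := 1 - goldenTheta

/-- α = 1 + i(1−θ). -/
def alpha : ℂ := 1 + Complex.I * (1 - (goldenTheta : ℂ))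

/-- ᾱ = 1 + i(1−θ̄). -/
def alphaBar : ℂ := 1 + Complex.I * (1 - (goldenThetaBar : ℂ))

/-- The 3D MIMO codeword matrix X(s), a 4×4 complex matrix built from the
eight information symbols s₁,…,s₈ (here 0-indexed as `s 0`,…,`s 7`). -/
def codeword (s : Fin 8 → ℂ) : Matrix (Fin 4) (Fin 4) ℂ :=
  ((Real.sqrt 5 : ℂ))⁻¹ •
  !![alpha * (s 0 + (goldenTheta : ℂ) * s 1),
     alpha * (s 2 + (goldenTheta : ℂ) * s 3),
     -(starRingEnd ℂ alpha) * (starRingEnd ℂ (s 4) + (goldenTheta : ℂ) * starRingEnd ℂ (s 5)),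
     -(starRingEnd ℂ alpha) * (starRingEnd ℂ (s 6) + (goldenTheta : ℂ) * starRingEnd ℂ (s 7));
     Complex.I * alphaBar * (s 2 + (goldenThetaBar : ℂ) * s 3),
     alphaBar * (s 0 + (goldenThetaBar : ℂ) * s 1),
     Complex.I * (starRingEnd ℂ alphaBar) * (starRingEnd ℂ (s 6) + (goldenThetaBar : ℂ) * starRingEnd ℂ (s 7)),
     -(starRingEnd ℂ alphaBar) * (starRingEnd ℂ (s 4) + (goldenThetaBar : ℂ) * starRingEnd ℂ (s 5));
     alpha * (s 4 + (goldenTheta : ℂ) * s 5),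
     alpha * (s 6 + (goldenTheta : ℂ) * s 7),
     (starRingEnd ℂ alpha) * (starRingEnd ℂ (s 0) + (goldenTheta : ℂ) * starRingEnd ℂ (s 1)),
     (starRingEnd ℂ alpha) * (starRingEnd ℂ (s 2) + (goldenTheta : ℂ) * starRingEnd ℂ (s 3));
     Complex.I * alphaBar * (s 6 + (goldenThetaBar : ℂ) * s 7),
     alphaBar * (s 4 + (goldenThetaBar : ℂ) * s 5),
     -(Complex.I * (starRingEnd ℂ alphaBar) * (starRingEnd ℂ (s 2) + (goldenThetaBar : ℂ) * starRingEnd ℂ (s 3))),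
     (starRingEnd ℂ alphaBar) * (starRingEnd ℂ (s 0) + (goldenThetaBar : ℂ) * starRingEnd ℂ (s 1))]

/-- ṽ(Y): stack the columns of the 2×4 complex matrix Y into ℂ^8
(giving (Y₁₁,Y₂₁,Y₁₂,Y₂₂,Y₁₃,Y₂₃,Y₁₄,Y₂₄)) and replace each complex entry z
by the pair (Re z, Im z), producing a vector of ℝ^16 (Euclidean space). -/
def tildeVec (Y : Matrix (Fin 2) (Fin 4) ℂ) : EuclideanSpace ℝ (Fin 16) :=
  WithLp.toLp 2 fun (m : Fin 16) =>
    if m.val % 2 = 0 then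
      (Y ⟨m.val % 4 / 2, by omega⟩ ⟨m.val / 4, by have := m.isLt; omega⟩).re
    else
      (Y ⟨m.val % 4 / 2, by omega⟩ ⟨m.val / 4, by have := m.isLt; omega⟩).im

/-- Recover the complex symbol vector s ∈ ℂ^8 from its real coordinate vector
s̃ = (Re s₁, Im s₁, …, Re s₈, Im s₈) ∈ ℝ^16. -/
def sOfReal (v : Fin 16 → ℝ) : Fin 8 → ℂ :=
  fun k => (v ⟨2 * k.val, by have := k.isLt; omega⟩ : ℂ)
    + (v ⟨2 * k.val + 1, by have := k.isLt; omega⟩ : ℂ) * Complex.I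

/-- The j-th column h_j (0-indexed: `hcol H j` is h_{j+1} of the paper) of the
equivalent channel matrix H_eq: the image of the j-th standard basis vector of
ℝ^16 under the ℝ-linear map s̃ ↦ ṽ(H · X(s)). -/
def hcol (H : Matrix (Fin 2) (Fin 4) ℂ) (j : Fin 16) : EuclideanSpace ℝ (Fin 16) :=
  tildeVec (H * codeword (sOfReal (Pi.single j 1)))

/-- The Gram–Schmidt residual r_j (0-indexed) of the columns of H_eq:
r_j = h_j − Σ_{k<j} ⟨q_k, h_j⟩ q_k. -/
def rvec (H : Matrix (Fin 2) (Fin 4) ℂ) (j : Fin 16) : EuclideanSpace ℝ (Fin 16) :=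
  have : WellFoundedLT (Fin 16) := inferInstance
  InnerProductSpace.gramSchmidt ℝ (hcol H) j

/-- The Gram–Schmidt orthonormalization q_j = r_j / ‖r_j‖ (0-indexed). -/
def qvec (H : Matrix (Fin 2) (Fin 4) ℂ) (j : Fin 16) : EuclideanSpace ℝ (Fin 16) :=
  have : WellFoundedLT (Fin 16) := inferInstance
  InnerProductSpace.gramSchmidtNormed ℝ (hcol H) j

end MIMO3D

open MIMO3D Complex InnerProductSpace

abbrev E16 := EuclideanSpace ℝ (Fin 16)

lemma sum16 (f : Fin 16 → ℝ) : ∑ i, f i =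
  f 0 + (f 1 + (f 2 + (f 3 + (f 4 + (f 5 + (f 6 + (f 7 + (f 8 + (f 9 +
  (f 10 + (f 11 + (f 12 + (f 13 + (f 14 + (f 15 + 0))))))))))))))) := rfl

def Jfun (v : E16) : E16 := WithLp.toLp 2 fun (m : Fin 16) =>
  if h : m.val % 2 = 0 then
    (if m.val < 8 then (-1:ℝ) else 1) * v ⟨m.val + 1, by omega⟩
  else
    (if m.val < 8 then (1:ℝ) else -1) * v ⟨m.val - 1, by omega⟩

lemma Jeval0 (v : E16) : Jfun v 0 = (-1:ℝ) * v 1 := rfl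
lemma fmk0 (h : 0 < 16) : (⟨0, h⟩ : Fin 16) = 0 := rfl
lemma Jeval1 (v : E16) : Jfun v 1 = (1:ℝ) * v 0 := rfl
lemma fmk1 (h : 1 < 16) : (⟨1, h⟩ : Fin 16) = 1 := rfl
lemma Jeval2 (v : E16) : Jfun v 2 = (-1:ℝ) * v 3 := rfl
lemma fmk2 (h : 2 < 16) : (⟨2, h⟩ : Fin 16) = 2 := rfl
lemma Jeval3 (v : E16) : Jfun v 3 = (1:ℝ) * v 2 := rfl
lemma fmk3 (h : 3 < 16) : (⟨3, h⟩ : Fin 16) = 3 := rfl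
lemma Jeval4 (v : E16) : Jfun v 4 = (-1:ℝ) * v 5 := rfl
lemma fmk4 (h : 4 < 16) : (⟨4, h⟩ : Fin 16) = 4 := rfl
lemma Jeval5 (v : E16) : Jfun v 5 = (1:ℝ) * v 4 := rfl
lemma fmk5 (h : 5 < 16) : (⟨5, h⟩ : Fin 16) = 5 := rfl
lemma Jeval6 (v : E16) : Jfun v 6 = (-1:ℝ) * v 7 := rfl
lemma fmk6 (h : 6 < 16) : (⟨6, h⟩ : Fin 16) = 6 := rfl
lemma Jeval7 (v : E16) : Jfun v 7 = (1:ℝ) * v 6 := rfl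
lemma fmk7 (h : 7 < 16) : (⟨7, h⟩ : Fin 16) = 7 := rfl
lemma Jeval8 (v : E16) : Jfun v 8 = (1:ℝ) * v 9 := rfl
lemma fmk8 (h : 8 < 16) : (⟨8, h⟩ : Fin 16) = 8 := rfl
lemma Jeval9 (v : E16) : Jfun v 9 = (-1:ℝ) * v 8 := rfl
lemma fmk9 (h : 9 < 16) : (⟨9, h⟩ : Fin 16) = 9 := rfl
lemma Jeval10 (v : E16) : Jfun v 10 = (1:ℝ) * v 11 := rfl
lemma fmk10 (h : 10 < 16) : (⟨10, h⟩ : Fin 16) = 10 := rfl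
lemma Jeval11 (v : E16) : Jfun v 11 = (-1:ℝ) * v 10 := rfl
lemma fmk11 (h : 11 < 16) : (⟨11, h⟩ : Fin 16) = 11 := rfl
lemma Jeval12 (v : E16) : Jfun v 12 = (1:ℝ) * v 13 := rfl
lemma fmk12 (h : 12 < 16) : (⟨12, h⟩ : Fin 16) = 12 := rfl
lemma Jeval13 (v : E16) : Jfun v 13 = (-1:ℝ) * v 12 := rfl
lemma fmk13 (h : 13 < 16) : (⟨13, h⟩ : Fin 16) = 13 := rfl
lemma Jeval14 (v : E16) : Jfun v 14 = (1:ℝ) * v 15 := rfl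
lemma fmk14 (h : 14 < 16) : (⟨14, h⟩ : Fin 16) = 14 := rfl
lemma Jeval15 (v : E16) : Jfun v 15 = (-1:ℝ) * v 14 := rfl
lemma fmk15 (h : 15 < 16) : (⟨15, h⟩ : Fin 16) = 15 := rfl

lemma Jfun_inner_left (x y : E16) : ⟪Jfun x, y⟫_ℝ = -⟪x, Jfun y⟫_ℝ := by
  simp only [PiLp.inner_apply, RCLike.inner_apply, conj_trivial, sum16, Jeval0, fmk0, Jeval1, fmk1, Jeval2, fmk2, Jeval3, fmk3, Jeval4, fmk4, Jeval5, fmk5, Jeval6, fmk6, Jeval7, fmk7, Jeval8, fmk8, Jeval9, fmk9, Jeval10, fmk10, Jeval11, fmk11, Jeval12, fmk12, Jeval13, fmk13, Jeval14, fmk14, Jeval15, fmk15]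
  ring

lemma Jfun_inner_inner (x y : E16) : ⟪Jfun x, Jfun y⟫_ℝ = ⟪x, y⟫_ℝ := by
  simp only [PiLp.inner_apply, RCLike.inner_apply, conj_trivial, sum16, Jeval0, fmk0, Jeval1, fmk1, Jeval2, fmk2, Jeval3, fmk3, Jeval4, fmk4, Jeval5, fmk5, Jeval6, fmk6, Jeval7, fmk7, Jeval8, fmk8, Jeval9, fmk9, Jeval10, fmk10, Jeval11, fmk11, Jeval12, fmk12, Jeval13, fmk13, Jeval14, fmk14, Jeval15, fmk15]
  ring

lemma Jfun_Jfun (x : E16) : Jfun (Jfun x) = -x := by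
  ext m
  fin_cases m <;> simp only [Jeval0, fmk0, Jeval1, fmk1, Jeval2, fmk2, Jeval3, fmk3, Jeval4, fmk4, Jeval5, fmk5, Jeval6, fmk6, Jeval7, fmk7, Jeval8, fmk8, Jeval9, fmk9, Jeval10, fmk10, Jeval11, fmk11, Jeval12, fmk12, Jeval13, fmk13, Jeval14, fmk14, Jeval15, fmk15, PiLp.neg_apply] <;> ring

lemma Jfun_add (x y : E16) : Jfun (x + y) = Jfun x + Jfun y := by
  ext m
  simp only [Jfun, PiLp.add_apply]
  split_ifs <;> ring

lemma Jfun_smul (c : ℝ) (x : E16) : Jfun (c • x) = c • Jfun x := by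
  ext m
  simp only [Jfun, PiLp.smul_apply, smul_eq_mul]
  split_ifs <;> ring

lemma Jfun_neg (x : E16) : Jfun (-x) = -Jfun x := by
  have h := Jfun_smul (-1) x
  simpa using h

lemma Jfun_sub (x y : E16) : Jfun (x - y) = Jfun x - Jfun y := by
  rw [sub_eq_add_neg, Jfun_add, Jfun_neg, sub_eq_add_neg]

lemma Jfun_zero : Jfun (0 : E16) = 0 := by
  ext m
  simp only [Jfun, PiLp.zero_apply]
  split_ifs <;> ring

lemma Jfun_self_inner (x : E16) : ⟪Jfun x, x⟫_ℝ = 0 := by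
  have h := Jfun_inner_left x x
  have h2 : ⟪x, Jfun x⟫_ℝ = ⟪Jfun x, x⟫_ℝ := real_inner_comm _ _
  linarith

lemma Jfun_norm (x : E16) : ‖Jfun x‖ = ‖x‖ := by
  have h := Jfun_inner_inner x x
  rw [real_inner_self_eq_norm_sq, real_inner_self_eq_norm_sq] at h
  have h1 := norm_nonneg (Jfun x); have h2 := norm_nonneg x
  nlinarith

lemma f4mk0 (h : 0 < 4) : (⟨0, h⟩ : Fin 4) = 0 := rfl
lemma f4mk1 (h : 1 < 4) : (⟨1, h⟩ : Fin 4) = 1 := rfl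
lemma f4mk2 (h : 2 < 4) : (⟨2, h⟩ : Fin 4) = 2 := rfl
lemma f4mk3 (h : 3 < 4) : (⟨3, h⟩ : Fin 4) = 3 := rfl

def Dmat : Matrix (Fin 4) (Fin 4) ℂ :=
  Matrix.diagonal ![Complex.I, Complex.I, -Complex.I, -Complex.I]

set_option maxHeartbeats 1000000 in
lemma codeword_I_smul (s : Fin 8 → ℂ) :
    codeword (Complex.I • s) = codeword s * Dmat := by
  unfold codeword Dmat
  rw [Matrix.smul_mul]
  congr 1
  ext i j
  rw [Matrix.mul_diagonal]
  fin_cases i <;> fin_cases j <;>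
    simp only [Matrix.cons_val', Matrix.cons_val_zero, Matrix.cons_val_one,
      Matrix.cons_val_two, Matrix.cons_val_three, Matrix.cons_val_succ, Matrix.head_cons,
      Matrix.head_fin_const, Matrix.empty_val', Matrix.cons_val_fin_one, Matrix.of_apply,
      Matrix.vecHead, Matrix.vecTail, Pi.smul_apply, smul_eq_mul, map_mul, map_add,
      Complex.conj_I, Function.comp_apply, Fin.mk_zero, Fin.mk_one,
      f4mk0, f4mk1, f4mk2, f4mk3] <;>
    ring

lemma tvE0 (Y : Matrix (Fin 2) (Fin 4) ℂ) : tildeVec Y 0 = (Y 0 0).re := rfl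
lemma tvE1 (Y : Matrix (Fin 2) (Fin 4) ℂ) : tildeVec Y 1 = (Y 0 0).im := rfl
lemma tvE2 (Y : Matrix (Fin 2) (Fin 4) ℂ) : tildeVec Y 2 = (Y 1 0).re := rfl
lemma tvE3 (Y : Matrix (Fin 2) (Fin 4) ℂ) : tildeVec Y 3 = (Y 1 0).im := rfl
lemma tvE4 (Y : Matrix (Fin 2) (Fin 4) ℂ) : tildeVec Y 4 = (Y 0 1).re := rfl
lemma tvE5 (Y : Matrix (Fin 2) (Fin 4) ℂ) : tildeVec Y 5 = (Y 0 1).im := rfl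
lemma tvE6 (Y : Matrix (Fin 2) (Fin 4) ℂ) : tildeVec Y 6 = (Y 1 1).re := rfl
lemma tvE7 (Y : Matrix (Fin 2) (Fin 4) ℂ) : tildeVec Y 7 = (Y 1 1).im := rfl
lemma tvE8 (Y : Matrix (Fin 2) (Fin 4) ℂ) : tildeVec Y 8 = (Y 0 2).re := rfl
lemma tvE9 (Y : Matrix (Fin 2) (Fin 4) ℂ) : tildeVec Y 9 = (Y 0 2).im := rfl
lemma tvE10 (Y : Matrix (Fin 2) (Fin 4) ℂ) : tildeVec Y 10 = (Y 1 2).re := rfl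
lemma tvE11 (Y : Matrix (Fin 2) (Fin 4) ℂ) : tildeVec Y 11 = (Y 1 2).im := rfl
lemma tvE12 (Y : Matrix (Fin 2) (Fin 4) ℂ) : tildeVec Y 12 = (Y 0 3).re := rfl
lemma tvE13 (Y : Matrix (Fin 2) (Fin 4) ℂ) : tildeVec Y 13 = (Y 0 3).im := rfl
lemma tvE14 (Y : Matrix (Fin 2) (Fin 4) ℂ) : tildeVec Y 14 = (Y 1 3).re := rfl
lemma tvE15 (Y : Matrix (Fin 2) (Fin 4) ℂ) : tildeVec Y 15 = (Y 1 3).im := rfl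

set_option maxHeartbeats 1000000 in
lemma tildeVec_mul_Dmat (Y : Matrix (Fin 2) (Fin 4) ℂ) :
    tildeVec (Y * Dmat) = Jfun (tildeVec Y) := by
  ext m
  fin_cases m <;>
    simp only [Jeval0, fmk0, Jeval1, fmk1, Jeval2, fmk2, Jeval3, fmk3, Jeval4, fmk4, Jeval5, fmk5, Jeval6, fmk6, Jeval7, fmk7, Jeval8, fmk8, Jeval9, fmk9, Jeval10, fmk10, Jeval11, fmk11, Jeval12, fmk12, Jeval13, fmk13, Jeval14, fmk14, Jeval15, fmk15, tvE0, tvE1, tvE2, tvE3, tvE4, tvE5, tvE6, tvE7, tvE8, tvE9, tvE10, tvE11, tvE12, tvE13, tvE14, tvE15, Dmat, Matrix.mul_diagonal,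
      Matrix.cons_val_zero, Matrix.cons_val_one, Matrix.cons_val_two, Matrix.cons_val_three,
      Matrix.head_cons, Matrix.vecHead, Matrix.vecTail, Function.comp_apply,
      Matrix.cons_val_succ, Complex.mul_re, Complex.mul_im, Complex.I_re, Complex.I_im,
      Complex.neg_re, Complex.neg_im] <;>
    ring

lemma sOfReal_single_even (t : Fin 8) :
    sOfReal (Pi.single (⟨2 * t.1, by omega⟩ : Fin 16) 1) = Pi.single t 1 := by
  funext k
  have hkt : k ≠ t → (k : ℕ) ≠ (t : ℕ) := fun h hh => h (Fin.ext hh)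
  simp only [sOfReal, Pi.single_apply, Fin.mk.injEq]
  rcases eq_or_ne k t with h | h
  · subst h
    rw [if_pos rfl, if_neg (by omega), if_pos rfl]
    norm_num
  · rw [if_neg (by have := hkt h; omega), if_neg (by have := hkt h; omega), if_neg h]
    norm_num

lemma sOfReal_single_odd (t : Fin 8) :
    sOfReal (Pi.single (⟨2 * t.1 + 1, by omega⟩ : Fin 16) 1) = Pi.single t Complex.I := by
  funext k
  have hkt : k ≠ t → (k : ℕ) ≠ (t : ℕ) := fun h hh => h (Fin.ext hh)
  simp only [sOfReal, Pi.single_apply, Fin.mk.injEq]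
  rcases eq_or_ne k t with h | h
  · subst h
    rw [if_neg (by omega), if_pos rfl, if_pos rfl]
    norm_num
  · rw [if_neg (by have := hkt h; omega), if_neg (by have := hkt h; omega), if_neg h]
    norm_num

lemma hcol_pair (H : Matrix (Fin 2) (Fin 4) ℂ) (t : Fin 8) :
    hcol H ⟨2 * t.1 + 1, by omega⟩ = Jfun (hcol H ⟨2 * t.1, by omega⟩) := by
  unfold hcol
  rw [sOfReal_single_odd, sOfReal_single_even,
    show (Pi.single t Complex.I : Fin 8 → ℂ) = Complex.I • (Pi.single t (1:ℂ) : Fin 8 → ℂ) by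
      funext k
      simp only [Pi.smul_apply, smul_eq_mul, Pi.single_apply]
      split_ifs <;> simp,
    codeword_I_smul, ← Matrix.mul_assoc, tildeVec_mul_Dmat]

instance : WellFoundedLT (Fin 16) := inferInstance

def Vsp (H : Matrix (Fin 2) (Fin 4) ℂ) (n : Fin 16) : Submodule ℝ E16 :=
  Submodule.span ℝ (hcol H '' Set.Iio n)

lemma rvec_eq (H : Matrix (Fin 2) (Fin 4) ℂ) (j : Fin 16) :
    rvec H j = gramSchmidt ℝ (hcol H) j := rfl

lemma qvec_eq (H : Matrix (Fin 2) (Fin 4) ℂ) (j : Fin 16) :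
    qvec H j = (‖rvec H j‖)⁻¹ • rvec H j := rfl

lemma rvec_perp (H : Matrix (Fin 2) (Fin 4) ℂ) (n : Fin 16) {v : E16}
    (hv : v ∈ Vsp H n) : ⟪rvec H n, v⟫_ℝ = 0 := by
  rw [rvec_eq]
  induction hv using Submodule.span_induction with
  | mem x hx =>
    obtain ⟨i, hi, rfl⟩ := hx
    exact gramSchmidt_inv_triangular ℝ (hcol H) hi
  | zero => exact inner_zero_right _
  | add x y hx hy ihx ihy => rw [inner_add_right, ihx, ihy]; ring
  | smul a x hx ihx => rw [real_inner_smul_right, ihx]; ring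

lemma sub_rvec_mem (H : Matrix (Fin 2) (Fin 4) ℂ) (n : Fin 16) :
    hcol H n - rvec H n ∈ Vsp H n := by
  rw [rvec_eq]
  have h := gramSchmidt_def'' ℝ (hcol H) n
  rw [sub_eq_iff_eq_add'.mpr h]
  refine Submodule.sum_mem _ fun i hi => Submodule.smul_mem _ _ ?_
  have h1 : gramSchmidt ℝ (hcol H) i ∈ Submodule.span ℝ (hcol H '' Set.Iic i) :=
    gramSchmidt_mem_span ℝ (hcol H) le_rfl
  exact Submodule.span_mono
    (Set.image_mono (fun x hx => lt_of_le_of_lt hx (Finset.mem_Iio.mp hi))) h1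

lemma Jfun_mem (H : Matrix (Fin 2) (Fin 4) ℂ) (n : Fin 16) (hn : n.1 % 2 = 0)
    {v : E16} (hv : v ∈ Vsp H n) : Jfun v ∈ Vsp H n := by
  induction hv using Submodule.span_induction with
  | mem x hx =>
    obtain ⟨i, hi, rfl⟩ := hx
    have hisLt := i.isLt
    have hin : i.1 < n.1 := hi
    by_cases hp : i.1 % 2 = 0
    · have e := hcol_pair H ⟨i.1 / 2, by omega⟩
      have e0 : (⟨2 * (i.1 / 2), by omega⟩ : Fin 16) = i := Fin.ext (by
        show 2 * (i.1 / 2) = i.1; omega)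
      rw [e0] at e
      rw [← e]
      exact Submodule.subset_span ⟨⟨2 * (i.1 / 2) + 1, by omega⟩, by
        rw [Set.mem_Iio, Fin.lt_def]; show 2 * (i.1 / 2) + 1 < n.1; omega, rfl⟩
    · have e := hcol_pair H ⟨i.1 / 2, by omega⟩
      have e1 : (⟨2 * (i.1 / 2) + 1, by omega⟩ : Fin 16) = i := Fin.ext (by
        show 2 * (i.1 / 2) + 1 = i.1; omega)
      rw [e1] at e
      rw [e, Jfun_Jfun]
      refine Submodule.neg_mem _ (Submodule.subset_span ⟨⟨2 * (i.1 / 2), by omega⟩, ?_, rfl⟩)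
      rw [Set.mem_Iio, Fin.lt_def]; show 2 * (i.1 / 2) < n.1; omega
  | zero => rw [Jfun_zero]; exact (Vsp H n).zero_mem
  | add x y hx hy ihx ihy => rw [Jfun_add]; exact Submodule.add_mem _ ihx ihy
  | smul a x hx ihx => rw [Jfun_smul]; exact Submodule.smul_mem _ _ ihx

lemma rvec_pair (H : Matrix (Fin 2) (Fin 4) ℂ) (t : Fin 8) :
    rvec H ⟨2 * t.1 + 1, by omega⟩ = Jfun (rvec H ⟨2 * t.1, by omega⟩) := by
  set n0 : Fin 16 := ⟨2 * t.1, by omega⟩ with hn0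
  set n1 : Fin 16 := ⟨2 * t.1 + 1, by omega⟩ with hn1
  have hn0v : n0.1 = 2 * t.1 := rfl
  have hn1v : n1.1 = 2 * t.1 + 1 := rfl
  have hn0e : n0.1 % 2 = 0 := by omega
  have hV01 : Vsp H n0 ≤ Vsp H n1 :=
    Submodule.span_mono (Set.image_mono (fun x hx => by
      rw [Set.mem_Iio] at hx ⊢
      rw [Fin.lt_def] at hx ⊢
      omega))
  have hpair : hcol H n1 = Jfun (hcol H n0) := hcol_pair H t
  -- J r0 is orthogonal to V n1
  have hJr : ∀ v ∈ Vsp H n1, ⟪Jfun (rvec H n0), v⟫_ℝ = 0 := by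
    intro v hv
    induction hv using Submodule.span_induction with
    | mem x hx =>
      obtain ⟨i, hi, rfl⟩ := hx
      have hin : i.1 < n1.1 := hi
      rw [Jfun_inner_left]
      rcases Nat.lt_or_ge i.1 n0.1 with hlt | hge
      · have : Jfun (hcol H i) ∈ Vsp H n0 :=
          Jfun_mem H n0 hn0e (Submodule.subset_span ⟨i, hlt, rfl⟩)
        rw [rvec_perp H n0 this]; ring
      · have hieq : i = n0 := Fin.ext (by omega)
        rw [hieq]
        have hdecomp : hcol H n0 = rvec H n0 + (hcol H n0 - rvec H n0) := by abel
        rw [hdecomp, Jfun_add, inner_add_right]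
        have t1 : ⟪rvec H n0, Jfun (rvec H n0)⟫_ℝ = 0 := by
          rw [real_inner_comm]; exact Jfun_self_inner _
        have t2 : ⟪rvec H n0, Jfun (hcol H n0 - rvec H n0)⟫_ℝ = 0 :=
          rvec_perp H n0 (Jfun_mem H n0 hn0e (sub_rvec_mem H n0))
        rw [t1, t2]; ring
    | zero => exact inner_zero_right _
    | add x y hx hy ihx ihy => rw [inner_add_right, ihx, ihy]; ring
    | smul a x hx ihx => rw [real_inner_smul_right, ihx]; ring
  have hd_mem : rvec H n1 - Jfun (rvec H n0) ∈ Vsp H n1 := by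
    have e : rvec H n1 - Jfun (rvec H n0) =
        Jfun (hcol H n0 - rvec H n0) - (hcol H n1 - rvec H n1) := by
      rw [Jfun_sub, ← hpair]; abel
    rw [e]
    exact Submodule.sub_mem _ (hV01 (Jfun_mem H n0 hn0e (sub_rvec_mem H n0)))
      (sub_rvec_mem H n1)
  have hzero : rvec H n1 - Jfun (rvec H n0) = 0 := by
    have h5 : ⟪rvec H n1 - Jfun (rvec H n0), rvec H n1 - Jfun (rvec H n0)⟫_ℝ = 0 := by
      rw [inner_sub_left, rvec_perp H n1 hd_mem, hJr _ hd_mem]; ring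
    exact inner_self_eq_zero.mp h5
  exact sub_eq_zero.mp hzero

lemma qvec_pair (H : Matrix (Fin 2) (Fin 4) ℂ) (t : Fin 8) :
    qvec H ⟨2 * t.1 + 1, by omega⟩ = Jfun (qvec H ⟨2 * t.1, by omega⟩) := by
  rw [qvec_eq, qvec_eq, rvec_pair, Jfun_norm, Jfun_smul]

/-- The antisymmetry identities ⟨q_{j+1},h_k⟩ = −⟨q_j,h_{k+1}⟩
hold for all j ∈ {5,7} and k ∈ {9,11} (paper's 1-based indices; 0-indexed here:
j ∈ {4,6}, k ∈ {8,10}). -/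
theorem stmt10 (H : Matrix (Fin 2) (Fin 4) ℂ) (hLI : LinearIndependent ℝ (hcol H))
    (j k : Fin 16) (hj : j = 4 ∨ j = 6) (hk : k = 8 ∨ k = 10) :
    ⟪qvec H (j + 1), hcol H k⟫_ℝ = -⟪qvec H j, hcol H (k + 1)⟫_ℝ := by
  have hq5 : qvec H 5 = Jfun (qvec H 4) := qvec_pair H 2
  have hq7 : qvec H 7 = Jfun (qvec H 6) := qvec_pair H 3
  have hh9 : hcol H 9 = Jfun (hcol H 8) := hcol_pair H 4
  have hh11 : hcol H 11 = Jfun (hcol H 10) := hcol_pair H 5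
  rcases hj with rfl | rfl <;> rcases hk with rfl | rfl
  · rw [show (4:Fin 16) + 1 = 5 by decide, show (8:Fin 16) + 1 = 9 by decide,
      hq5, hh9, Jfun_inner_left]
  · rw [show (4:Fin 16) + 1 = 5 by decide, show (10:Fin 16) + 1 = 11 by decide,
      hq5, hh11, Jfun_inner_left]
  · rw [show (6:Fin 16) + 1 = 7 by decide, show (8:Fin 16) + 1 = 9 by decide,
      hq7, hh9, Jfun_inner_left]
  · rw [show (6:Fin 16) + 1 = 7 by decide, show (10:Fin 16) + 1 = 11 by decide,
      hq7, hh11, Jfun_inner_left]
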